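/- The polynomial algebra F[x] over a field F does not have property τ with respect to the generating set {x}, provided F admits finite field extensions of arbitrarily large degree. Precisely: for every ε > 0 there exist an irreducible polynomial f ∈ F[x] of some degree n and a subspace W of the F-algebra F[x]/(f) with dim W ≤ n/2 and dim(W + x·W) < (1+ε)·dim W. -/

import Mathlib

open Module Polynomial

/-- If `F` admits irreducible polynomials of arbitrarily large degree, then the algebra
`F[x]` does not have property τ with respect to `{x}`: for every `ε > 0` there is an
irreducible `f` of some degree `n` and a subspace `W` of `F[x]/(f)` with
`dim W ≤ n/2` and `dim(W + x·W) < (1+ε)·dim W`. -/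
theorem polynomial_algebra_not_tau
    (F : Type*) [Field F]
    (hF : ∀ N : ℕ, ∃ f : F[X], Irreducible f ∧ N ≤ f.natDegree) :
    ∀ ε : ℝ, 0 < ε →
      ∃ f : F[X], Irreducible f ∧
        ∃ W : Submodule F (F[X] ⧸ Ideal.span {f}),
          (finrank F W : ℝ) ≤ (f.natDegree : ℝ) / 2 ∧
          ((finrank F ↥(W ⊔ W.map
              (LinearMap.mulLeft F (Ideal.Quotient.mk (Ideal.span {f}) X)))) : ℝ)
            < (1 + ε) * finrank F W := by
  intro ε hε
  obtain ⟨k, hk⟩ := exists_nat_gt (1 / ε)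
  obtain ⟨f, hf, hdeg⟩ := hF (2 * (k + 2))
  refine ⟨f, hf, ?_⟩
  have hf0 : f ≠ 0 := hf.ne_zero
  let pb := AdjoinRoot.powerBasis hf0
  haveI : FiniteDimensional F (AdjoinRoot f) := pb.finite
  have hdim : pb.dim = f.natDegree := AdjoinRoot.powerBasis_dim hf0
  have hle : k + 2 ≤ pb.dim := by omega
  -- the family of powers of the root
  set r : AdjoinRoot f := AdjoinRoot.root f with hr
  have hbpow : ∀ i : Fin pb.dim, pb.basis i = r ^ (i : ℕ) := by
    intro i
    rw [pb.basis_eq_pow, AdjoinRoot.powerBasis_gen hf0]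
  have li : LinearIndependent F (fun i : Fin (k + 2) => r ^ (i : ℕ)) := by
    have := pb.basis.linearIndependent.comp (fun i : Fin (k + 2) => Fin.castLE hle i)
      (Fin.castLE_injective hle)
    convert this using 1
    funext i
    rw [Function.comp_apply, hbpow]
    rfl
    rfl
  have li1 : LinearIndependent F (fun i : Fin (k + 1) => r ^ (i : ℕ)) := by
    have := li.comp (fun i : Fin (k + 1) => Fin.castLE (Nat.le_succ _) i)
      (Fin.castLE_injective _)
    convert this using 1
    funext i
    rfl
  set W : Submodule F (AdjoinRoot f) :=
    Submodule.span F (Set.range fun i : Fin (k + 1) => r ^ (i : ℕ)) with hW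
  set Wbig : Submodule F (AdjoinRoot f) :=
    Submodule.span F (Set.range fun i : Fin (k + 2) => r ^ (i : ℕ)) with hWbig
  have hfin : finrank F W = k + 1 := by
    rw [hW, finrank_span_eq_card li1, Fintype.card_fin]
  have hfinbig : finrank F Wbig = k + 2 := by
    rw [hWbig, finrank_span_eq_card li, Fintype.card_fin]
  have hmk : (Ideal.Quotient.mk (Ideal.span {f}) X : F[X] ⧸ Ideal.span {f}) = r := rfl
  have hsup : W ⊔ W.map (LinearMap.mulLeft F r) ≤ Wbig := by
    apply sup_le
    · rw [hW, hWbig]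
      apply Submodule.span_mono
      rintro _ ⟨i, rfl⟩
      exact ⟨Fin.castLE (by omega) i, rfl⟩
    · rw [hW, Submodule.map_span, hWbig]
      apply Submodule.span_mono
      rintro _ ⟨_, ⟨i, rfl⟩, rfl⟩
      refine ⟨⟨(i : ℕ) + 1, by omega⟩, ?_⟩
      simp [LinearMap.mulLeft_apply, pow_succ, mul_comm]
  have hfinsup : finrank F ↥(W ⊔ W.map (LinearMap.mulLeft F r)) ≤ k + 2 := by
    rw [← hfinbig]
    exact Submodule.finrank_mono hsup
  have goal1 : (finrank F ↥W : ℝ) ≤ (f.natDegree : ℝ) / 2 := by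
    rw [hfin]
    have : (2 * (k + 2) : ℝ) ≤ (f.natDegree : ℝ) := by exact_mod_cast hdeg
    push_cast
    linarith
  have goal2 : ((finrank F ↥(W ⊔ W.map (LinearMap.mulLeft F r))) : ℝ)
      < (1 + ε) * finrank F W := by
    rw [hfin]
    have h1 : (finrank F ↥(W ⊔ W.map (LinearMap.mulLeft F r)) : ℝ) ≤ (k : ℝ) + 2 := by
      exact_mod_cast hfinsup
    have hk' : 1 < ε * k := by
      rw [div_lt_iff₀ hε] at hk
      linarith [mul_comm ε (k : ℝ)]
    push_cast
    nlinarith [hε]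
  exact ⟨W, goal1, goal2⟩
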